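/- Let q be a prime power and n a positive integer. The number of distinct monic irreducible factors of x^n − 1 over F_q is at most n/a + b for each of the following choices of the pair (a,b): (1, 0), (2, (q−1)/2), (3, (q²+3q−4)/6), (4, (q³+3q²+5q−9)/12), and (5, (3q⁴+8q³+15q²+22q−48)/60). -/

import Mathlib

open Polynomial

open IntermediateField in
lemma aux_root_pow (F E : Type*) [Field F] [Fintype F] [Field E] [Algebra F E]
    [FiniteDimensional F E] {q : ℕ} (hF : Fintype.card F = q)
    {h : F[X]} (hm : h.Monic) (hi : Irreducible h) {r : E}
    (hr : aeval r h = 0) :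
    r ^ q ^ h.natDegree = r ∧ ∀ e, 0 < e → e < h.natDegree → r ^ q ^ e ≠ r := by
  classical
  have hq2 : 2 ≤ q := hF ▸ Fintype.one_lt_card
  haveI : Finite E := Module.finite_of_finite F
  haveI : Fintype E := Fintype.ofFinite E
  have hint : IsIntegral F r := IsIntegral.of_finite F r
  have hmin : minpoly F r = h := (minpoly.eq_of_irreducible_of_monic hi hr hm).symm
  have hfin : Module.finrank F F⟮r⟯ = h.natDegree := by
    rw [IntermediateField.adjoin.finrank hint, hmin]
  haveI : Fintype (F⟮r⟯ : IntermediateField F E) := Fintype.ofFinite _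
  have hcard : Fintype.card (F⟮r⟯ : IntermediateField F E) = q ^ h.natDegree := by
    rw [Module.card_eq_pow_finrank (K := F), hF, hfin]
  constructor
  · have := FiniteField.pow_card (⟨r, IntermediateField.mem_adjoin_simple_self F r⟩ :
      (F⟮r⟯ : IntermediateField F E))
    rw [hcard] at this
    have := congrArg (Subtype.val) this
    push_cast at this
    simpa using this
  · intro e he hed heq
    obtain ⟨p, _inst⟩ := CharP.exists F
    haveI := _inst
    obtain ⟨k, hp, hcardF⟩ := FiniteField.card F p
    have hqpk : q = p ^ (k : ℕ) := hF ▸ hcardF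
    haveI : CharP E p := charP_of_injective_algebraMap (algebraMap F E).injective p
    haveI : Fact p.Prime := ⟨hp⟩
    haveI : ExpChar E p := .prime hp
    set φ := iterateFrobenius E p (e * (k : ℕ)) with hφ
    have hφx : ∀ x : E, φ x = x ^ q ^ e := by
      intro x
      rw [hφ, iterateFrobenius_def, hqpk, ← pow_mul, mul_comm (k : ℕ) e]
    set K : Subfield E := RingHom.eqLocusField φ (RingHom.id E) with hK
    have hmemK : ∀ x : E, x ∈ K ↔ x ^ q ^ e = x := by
      intro x
      constructor
      · intro hx
        have : φ x = x := hx
        rwa [hφx] at this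
      · intro hx
        show φ x = RingHom.id E x
        rw [hφx]
        exact hx
    set K' : IntermediateField F E := K.toIntermediateField (fun s => by
      rw [hmemK, ← map_pow]
      congr 1
      rw [← hF]
      exact FiniteField.pow_card_pow e s) with hK'
    have hrK : r ∈ K' := (hmemK r).mpr heq
    have hle : F⟮r⟯ ≤ K' := by
      rw [IntermediateField.adjoin_le_iff]
      exact Set.singleton_subset_iff.mpr hrK
    haveI : Fintype K' := Fintype.ofFinite _
    have hq1 : 1 < q := by omega
    have hfe : (X ^ q ^ e - X : E[X]) ≠ 0 := by
      have := FiniteField.X_pow_card_pow_sub_X_ne_zero E he.ne' hq1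
      exact this
    have hsub : (K' : Set E).toFinset ⊆ (X ^ q ^ e - X : E[X]).roots.toFinset := by
      intro x hx
      rw [Set.mem_toFinset] at hx
      rw [Multiset.mem_toFinset, mem_roots hfe]
      have hx' : x ^ q ^ e = x := (hmemK x).mp hx
      simp [IsRoot, sub_eq_zero, hx']
    have hcardK' : Fintype.card K' ≤ q ^ e := by
      calc Fintype.card K' = (K' : Set E).toFinset.card := by
            rw [Set.toFinset_card]; rfl
        _ ≤ _ := Finset.card_le_card hsub
        _ ≤ (X ^ q ^ e - X : E[X]).natDegree :=
            (Multiset.toFinset_card_le _).trans (card_roots' _)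
        _ = q ^ e := FiniteField.X_pow_card_pow_sub_X_natDegree_eq E he.ne' hq1
    have hmono : Fintype.card (F⟮r⟯ : IntermediateField F E) ≤ Fintype.card K' := by
      apply Fintype.card_le_of_injective (fun x => ⟨x.1, hle x.2⟩)
      intro a b hab
      simp only [Subtype.mk.injEq] at hab
      exact Subtype.ext hab
    have hlt : q ^ e < q ^ h.natDegree := Nat.pow_lt_pow_right hq1 hed
    omega

lemma aux_S (F : Type*) [Field F] {n : ℕ} (hn : 0 < n) :
    ∃ S : Finset F[X],
      (∀ h, h ∈ S ↔ h.Monic ∧ Irreducible h ∧ h ∣ (X ^ n - 1)) ∧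
      ∑ h ∈ S, h.natDegree ≤ n := by
  classical
  set P : F[X] := X ^ n - 1 with hP
  have hPm : P.Monic := by
    have := monic_X_pow_sub_C (1 : F) hn.ne'
    simpa [hP] using this
  have hP0 : P ≠ 0 := hPm.ne_zero
  have hPdeg : P.natDegree = n := by
    have : (X ^ n - C (1:F)).natDegree = n := natDegree_X_pow_sub_C
    simpa [hP] using this
  set S : Finset F[X] := (UniqueFactorizationMonoid.normalizedFactors P).toFinset with hS
  have hmem : ∀ h, h ∈ S ↔ h.Monic ∧ Irreducible h ∧ h ∣ P := by
    intro h
    constructor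
    · intro hh
      rw [hS, Multiset.mem_toFinset] at hh
      refine ⟨?_, UniqueFactorizationMonoid.irreducible_of_normalized_factor h hh,
        UniqueFactorizationMonoid.dvd_of_mem_normalizedFactors hh⟩
      have h0 : h ≠ 0 := (UniqueFactorizationMonoid.irreducible_of_normalized_factor h hh).ne_zero
      have := UniqueFactorizationMonoid.normalize_normalized_factor h hh
      rw [← this]
      exact monic_normalize h0
    · rintro ⟨hm, hi, hd⟩
      obtain ⟨g, hg, hassoc⟩ :=
        UniqueFactorizationMonoid.exists_mem_normalizedFactors_of_dvd hP0 hi hd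
      have hgm : g.Monic := by
        have h0 : g ≠ 0 := (UniqueFactorizationMonoid.irreducible_of_normalized_factor g hg).ne_zero
        have := UniqueFactorizationMonoid.normalize_normalized_factor g hg
        rw [← this]
        exact monic_normalize h0
      rw [hS, Multiset.mem_toFinset]
      rwa [Polynomial.eq_of_monic_of_associated hm hgm hassoc]
  refine ⟨S, hmem, ?_⟩
  have hne : ∀ h ∈ S, h ≠ (0 : F[X]) := fun h hh => ((hmem h).mp hh).2.1.ne_zero
  have hdvd : ∏ h ∈ S, h ∣ P := by
    have h1 : ∏ h ∈ S, h = ((UniqueFactorizationMonoid.normalizedFactors P).dedup).prod := by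
      rw [hS, Finset.prod_eq_multiset_prod]; simp [Multiset.toFinset]
    have h2 : ((UniqueFactorizationMonoid.normalizedFactors P).dedup).prod ∣
        (UniqueFactorizationMonoid.normalizedFactors P).prod :=
      Multiset.prod_dvd_prod_of_le (Multiset.dedup_le _)
    rw [h1]
    exact h2.trans (UniqueFactorizationMonoid.prod_normalizedFactors hP0).dvd
  calc ∑ h ∈ S, h.natDegree = (∏ h ∈ S, h).natDegree := (natDegree_prod _ _ hne).symm
    _ ≤ P.natDegree := natDegree_le_of_dvd hdvd hP0
    _ = n := hPdeg

lemma aux_counts (F : Type*) [Field F] [Fintype F] {q n : ℕ} (hF : Fintype.card F = q)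
    (hn : 0 < n) (S : Finset F[X])
    (hmem : ∀ h, h ∈ S ↔ h.Monic ∧ Irreducible h ∧ h ∣ (X ^ n - 1)) :
    1 * (S.filter (fun h => h.natDegree = 1)).card + 1 ≤ q ∧
    2 * (S.filter (fun h => h.natDegree = 2)).card + q ≤ q ^ 2 ∧
    3 * (S.filter (fun h => h.natDegree = 3)).card + q ≤ q ^ 3 ∧
    4 * (S.filter (fun h => h.natDegree = 4)).card + q ^ 2 ≤ q ^ 4 := by
  classical
  have hq2 : 2 ≤ q := hF ▸ Fintype.one_lt_card
  have hq1 : 1 < q := hq2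
  have hq0 : q ≠ 0 := by omega
  set P : F[X] := X ^ n - 1 with hP
  have hPm : P.Monic := by
    have := monic_X_pow_sub_C (1 : F) hn.ne'
    simpa [hP] using this
  have hP0 : P ≠ 0 := hPm.ne_zero
  set g : ℕ → F[X] := fun e => X ^ q ^ e - X with hg
  have hg0 : ∀ e, 0 < e → g e ≠ 0 := fun e he =>
    FiniteField.X_pow_card_pow_sub_X_ne_zero F he.ne' hq1
  set P' : F[X] := P * g 4 with hP'
  have hP'0 : P' ≠ 0 := mul_ne_zero hP0 (hg0 4 (by norm_num))
  set E := P'.SplittingField with hE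
  set ι := algebraMap F E with hι
  have hsplitP' : Splits (P'.map ι) := SplittingField.splits P'
  -- divisibility chain g 1 ∣ g 2 ∣ g 4
  have h12 : g 1 ∣ g 2 := by
    have hdvd := sub_dvd_pow_sub_pow (X ^ q : F[X]) X q
    have heq : g 2 = ((X ^ q : F[X]) ^ q - X ^ q) + (X ^ q - X) := by
      rw [hg]
      ring_nf
    rw [heq]
    exact dvd_add (by simpa [pow_one, hg] using hdvd) (by simp [hg, pow_one])
  have h24 : g 2 ∣ g 4 := by
    have hdvd := sub_dvd_pow_sub_pow (X ^ q ^ 2 : F[X]) X (q ^ 2)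
    have heq : g 4 = ((X ^ q ^ 2 : F[X]) ^ q ^ 2 - X ^ q ^ 2) + (X ^ q ^ 2 - X) := by
      rw [hg]
      ring_nf
    rw [heq]
    exact dvd_add (by simpa [hg] using hdvd) (by simp [hg])
  have h14 : g 1 ∣ g 4 := h12.trans h24
  have hgP' : ∀ e, e = 1 ∨ e = 2 ∨ e = 4 → g e ∣ P' := by
    rintro e (rfl | rfl | rfl)
    · exact h14.trans (dvd_mul_left _ _)
    · exact h24.trans (dvd_mul_left _ _)
    · exact dvd_mul_left _ _
  -- the root sets
  set A : ℕ → Finset E := fun e => ((g e).map ι).roots.toFinset with hA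
  have hmapg : ∀ e, (g e).map ι = X ^ q ^ e - X := by
    intro e
    simp [hg, Polynomial.map_sub, Polynomial.map_pow, Polynomial.map_X]
  have hmemA : ∀ e x, 0 < e → (x ∈ A e ↔ x ^ q ^ e = x) := by
    intro e x he
    rw [hA]
    simp only [Multiset.mem_toFinset]
    rw [hmapg e, mem_roots (FiniteField.X_pow_card_pow_sub_X_ne_zero E he.ne' hq1)]
    simp [IsRoot, sub_eq_zero]
  have hcardA_le : ∀ e, 0 < e → (A e).card ≤ q ^ e := by
    intro e he
    calc (A e).card ≤ Multiset.card ((g e).map ι).roots := Multiset.toFinset_card_le _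
      _ ≤ ((g e).map ι).natDegree := card_roots' _
      _ = q ^ e := by
        rw [hmapg e]
        exact FiniteField.X_pow_card_pow_sub_X_natDegree_eq E he.ne' hq1
  have hsepg : ∀ e, 0 < e → (g e).Separable := by
    intro e he
    have hder : derivative (g e) = -1 := by
      rw [hg]
      simp only [derivative_sub, derivative_X_pow, derivative_X]
      have : ((q : F) ^ e) = 0 := by
        rw [← hF]
        simp [FiniteField.cast_card_eq_zero, he.ne']
      simp [this]
    refine ⟨0, -1, ?_⟩
    rw [hder]
    ring
  have hcardA_eq : ∀ e, e = 1 ∨ e = 2 → (A e).card = q ^ e := by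
    intro e hee
    have he : 0 < e := by rcases hee with rfl | rfl <;> norm_num
    have hsplit : Splits ((g e).map ι) :=
      Splits.of_dvd hsplitP' (map_ne_zero hP'0) (Polynomial.map_dvd ι (hgP' e (by tauto)))
    have hnodup : ((g e).map ι).roots.Nodup := nodup_roots ((hsepg e he).map)
    calc (A e).card = Multiset.card ((g e).map ι).roots :=
          Multiset.toFinset_card_of_nodup hnodup
      _ = (g e).natDegree := by rw [← hsplit.natDegree_eq_card_roots, natDegree_map]
      _ = q ^ e := by
        rw [hg]
        exact FiniteField.X_pow_card_pow_sub_X_natDegree_eq F he.ne' hq1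
  -- root sets of factors
  set Rt : F[X] → Finset E := fun h => ((h.map ι).roots).toFinset with hRt
  have hfacts : ∀ h ∈ S, (Rt h).card = h.natDegree ∧
      (∀ r ∈ Rt h, aeval r h = 0 ∧ r ≠ 0) := by
    intro h hh
    obtain ⟨hm, hi, hdvd⟩ := (hmem h).mp hh
    have hsplith : Splits (h.map ι) :=
      Splits.of_dvd hsplitP' (map_ne_zero hP'0) (Polynomial.map_dvd ι (hdvd.trans (dvd_mul_right P (g 4))))
    have hsep : h.Separable := PerfectField.separable_of_irreducible hi
    constructor
    · calc (Rt h).card = Multiset.card (h.map ι).roots :=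
            Multiset.toFinset_card_of_nodup (nodup_roots hsep.map)
        _ = h.natDegree := by rw [← hsplith.natDegree_eq_card_roots, natDegree_map]
    · intro r hr
      rw [hRt] at hr
      simp only [Multiset.mem_toFinset] at hr
      rw [mem_roots (map_ne_zero hi.ne_zero)] at hr
      have haev : aeval r h = 0 := by
        rw [aeval_def, ← eval_map]
        exact hr
      refine ⟨haev, ?_⟩
      obtain ⟨c, hc⟩ := hdvd
      have : aeval r P = 0 := by
        rw [hc, map_mul, haev, zero_mul]
      rw [hP] at this
      simp only [map_sub, map_pow, aeval_X, map_one] at this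
      intro h0
      rw [h0, zero_pow hn.ne', zero_sub] at this
      exact one_ne_zero (neg_eq_zero.mp this)
  have hdisjoint : ∀ h₁ ∈ S, ∀ h₂ ∈ S, h₁ ≠ h₂ → Disjoint (Rt h₁) (Rt h₂) := by
    intro h₁ hh₁ h₂ hh₂ hne
    obtain ⟨hm₁, hi₁, _⟩ := (hmem h₁).mp hh₁
    obtain ⟨hm₂, hi₂, _⟩ := (hmem h₂).mp hh₂
    have hnd : ¬ h₁ ∣ h₂ := by
      intro hd
      exact hne (eq_of_monic_of_associated hm₁ hm₂ (hi₁.associated_of_dvd hi₂ hd))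
    have hcop : IsCoprime h₁ h₂ := (hi₁.isCoprime_or_dvd h₂).resolve_right hnd
    have hcop' : IsCoprime (h₁.map ι) (h₂.map ι) := by
      have := hcop.map (mapRingHom ι)
      simpa [coe_mapRingHom] using this
    rw [Finset.disjoint_left]
    intro r hr₁ hr₂
    obtain ⟨a, b, hab⟩ := hcop'
    rw [hRt] at hr₁ hr₂
    simp only [Multiset.mem_toFinset] at hr₁ hr₂
    have he₁ : (h₁.map ι).eval r = 0 := (mem_roots (map_ne_zero hi₁.ne_zero)).mp hr₁
    have he₂ : (h₂.map ι).eval r = 0 := (mem_roots (map_ne_zero hi₂.ne_zero)).mp hr₂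
    have := congrArg (Polynomial.eval r) hab
    simp [he₁, he₂] at this
  -- the master count
  have key : ∀ (d : ℕ) (C : Finset E), 0 < d →
      (∀ x ∈ C, x ∈ A d) →
      (∀ h ∈ S, h.natDegree = d → ∀ r ∈ Rt h, r ∉ C) →
      d * (S.filter (fun h => h.natDegree = d)).card + C.card ≤ q ^ d := by
    intro d C hd hCA hCR
    set T := S.filter (fun h => h.natDegree = d) with hT
    have hbi : (T.biUnion Rt).card = ∑ h ∈ T, (Rt h).card :=
      Finset.card_biUnion (fun h₁ hh₁ h₂ hh₂ hne =>
        hdisjoint h₁ (Finset.mem_filter.mp hh₁).1 h₂ (Finset.mem_filter.mp hh₂).1 hne)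
    have hsum : ∑ h ∈ T, (Rt h).card = d * T.card := by
      rw [Finset.sum_congr rfl (fun h hh => ?_), Finset.sum_const, smul_eq_mul, mul_comm]
      rw [(hfacts h (Finset.mem_filter.mp hh).1).1, (Finset.mem_filter.mp hh).2]
    have hsubset : T.biUnion Rt ⊆ A d \ C := by
      intro r hr
      rw [Finset.mem_biUnion] at hr
      obtain ⟨h, hh, hrh⟩ := hr
      have hhS := (Finset.mem_filter.mp hh).1
      have hhd := (Finset.mem_filter.mp hh).2
      obtain ⟨hm, hi, hdvd⟩ := (hmem h).mp hhS
      have haev := ((hfacts h hhS).2 r hrh).1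
      have hpow := (aux_root_pow F E hF hm hi haev).1
      rw [Finset.mem_sdiff]
      refine ⟨(hmemA d r hd).mpr (by rwa [hhd] at hpow), hCR h hhS hhd r hrh⟩
    have hCsub : C ⊆ A d := fun x hx => hCA x hx
    have h1 : (T.biUnion Rt).card ≤ (A d \ C).card := Finset.card_le_card hsubset
    rw [Finset.card_sdiff_of_subset hCsub] at h1
    have h2 : C.card ≤ (A d).card := Finset.card_le_card hCsub
    have h3 := hcardA_le d hd
    omega
  -- exclusion properties
  have hexc : ∀ h ∈ S, ∀ e, 0 < e → e < h.natDegree → ∀ r ∈ Rt h, ¬ r ^ q ^ e = r := by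
    intro h hh e he hed r hr
    obtain ⟨hm, hi, hdvd⟩ := (hmem h).mp hh
    exact (aux_root_pow F E hF hm hi ((hfacts h hh).2 r hr).1).2 e he hed
  refine ⟨?_, ?_, ?_, ?_⟩
  · have := key 1 {0} one_pos ?_ ?_
    · simpa using this
    · intro x hx
      rw [Finset.mem_singleton] at hx
      subst hx
      rw [hmemA 1 0 one_pos]
      simp [hq0]
    · intro h hh _ r hr hrC
      rw [Finset.mem_singleton] at hrC
      exact ((hfacts h hh).2 r hr).2 hrC
  · have := key 2 (A 1) two_pos ?_ ?_
    · have hc := hcardA_eq 1 (Or.inl rfl)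
      rw [hc] at this
      simpa using this
    · intro x hx
      rw [hmemA 1 x one_pos] at hx
      rw [hmemA 2 x two_pos]
      calc x ^ q ^ 2 = (x ^ q) ^ q := by rw [← pow_mul, sq]
        _ = x := by rw [pow_one] at hx; rw [hx, hx]
    · intro h hh hd r hr hrC
      rw [hmemA 1 r one_pos] at hrC
      exact hexc h hh 1 one_pos (by omega) r hr hrC
  · have := key 3 (A 1) (by norm_num) ?_ ?_
    · have hc := hcardA_eq 1 (Or.inl rfl)
      rw [hc] at this
      simpa using this
    · intro x hx
      rw [hmemA 1 x one_pos] at hx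
      rw [hmemA 3 x (by norm_num)]
      rw [pow_one] at hx
      calc x ^ q ^ 3 = ((x ^ q) ^ q) ^ q := by rw [← pow_mul, ← pow_mul]; ring_nf
        _ = x := by rw [hx, hx, hx]
    · intro h hh hd r hr hrC
      rw [hmemA 1 r one_pos] at hrC
      exact hexc h hh 1 one_pos (by omega) r hr hrC
  · have := key 4 (A 2) (by norm_num) ?_ ?_
    · have hc := hcardA_eq 2 (Or.inr rfl)
      rw [hc] at this
      simpa using this
    · intro x hx
      rw [hmemA 2 x two_pos] at hx
      rw [hmemA 4 x (by norm_num)]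
      calc x ^ q ^ 4 = (x ^ q ^ 2) ^ q ^ 2 := by rw [← pow_mul, ← pow_add]
        _ = x := by rw [hx, hx]
    · intro h hh hd r hr hrC
      rw [hmemA 2 r two_pos] at hrC
      exact hexc h hh 2 two_pos (by omega) r hr hrC

theorem stmt_14 (q n : ℕ) (hq : IsPrimePow q) (hn : 0 < n)
    (F : Type) [Field F] [Fintype F] (hF : Fintype.card F = q)
    (N : ℕ)
    (hN : N = Set.ncard {h : Polynomial F | h.Monic ∧ Irreducible h ∧ h ∣ X ^ n - 1}) :
    (N : ℝ) ≤ (n : ℝ) / 1 + 0 ∧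
    (N : ℝ) ≤ (n : ℝ) / 2 + ((q : ℝ) - 1) / 2 ∧
    (N : ℝ) ≤ (n : ℝ) / 3 + ((q : ℝ) ^ 2 + 3 * q - 4) / 6 ∧
    (N : ℝ) ≤ (n : ℝ) / 4 + ((q : ℝ) ^ 3 + 3 * (q : ℝ) ^ 2 + 5 * q - 9) / 12 ∧
    (N : ℝ) ≤ (n : ℝ) / 5 +
      (3 * (q : ℝ) ^ 4 + 8 * (q : ℝ) ^ 3 + 15 * (q : ℝ) ^ 2 + 22 * q - 48) / 60 := by
  classical
  have hq2 : 2 ≤ q := hF ▸ Fintype.one_lt_card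
  obtain ⟨S, hmem, hsum⟩ := aux_S F (n := n) hn
  have hNS : N = S.card := by
    rw [hN]
    have hset : {h : Polynomial F | h.Monic ∧ Irreducible h ∧ h ∣ X ^ n - 1} = ↑S :=
      Set.ext (fun h => (hmem h).symm)
    rw [hset, Set.ncard_coe_finset]
  obtain ⟨c1, c2, c3, c4⟩ := aux_counts F hF hn S hmem
  set M : ℕ → ℕ := fun d => (S.filter (fun h => h.natDegree = d)).card with hM
  have hW : ∀ a : ℕ, a ≤ 5 →
      ∑ h ∈ S, (a - h.natDegree) ≤
        (a-1) * M 1 + (a-2) * M 2 + (a-3) * M 3 + (a-4) * M 4 := by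
    intro a ha
    have hpt : ∀ h ∈ S, (a - h.natDegree) ≤
        (if h.natDegree = 1 then a-1 else 0) + (if h.natDegree = 2 then a-2 else 0) +
        (if h.natDegree = 3 then a-3 else 0) + (if h.natDegree = 4 then a-4 else 0) := by
      intro h hh
      have hd1 : 0 < h.natDegree := ((hmem h).mp hh).2.1.natDegree_pos
      rcases (show h.natDegree = 1 ∨ h.natDegree = 2 ∨ h.natDegree = 3 ∨ h.natDegree = 4 ∨
          5 ≤ h.natDegree by omega) with h1 | h1 | h1 | h1 | h1
      · simp [h1]
      · simp [h1]
      · simp [h1]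
      · simp [h1]
      · have : h.natDegree ≠ 1 ∧ h.natDegree ≠ 2 ∧ h.natDegree ≠ 3 ∧ h.natDegree ≠ 4 := by omega
        simp [this.1, this.2.1, this.2.2.1, this.2.2.2]
        omega
    calc ∑ h ∈ S, (a - h.natDegree) ≤ _ := Finset.sum_le_sum hpt
      _ = (a-1) * M 1 + (a-2) * M 2 + (a-3) * M 3 + (a-4) * M 4 := by
        rw [Finset.sum_add_distrib, Finset.sum_add_distrib, Finset.sum_add_distrib]
        congr 1
        congr 1
        congr 1
        all_goals
          rw [← Finset.sum_filter, Finset.sum_const, smul_eq_mul, mul_comm, hM]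
    
  have hk : ∀ a : ℕ, a ≤ 5 → a * N ≤ n +
      ((a-1) * M 1 + (a-2) * M 2 + (a-3) * M 3 + (a-4) * M 4) := by
    intro a ha
    have h1 : a * N = ∑ _h ∈ S, a := by
      rw [Finset.sum_const, smul_eq_mul, mul_comm, hNS]
    have h2 : ∑ _h ∈ S, a ≤ ∑ h ∈ S, (h.natDegree + (a - h.natDegree)) :=
      Finset.sum_le_sum (fun h _ => by omega)
    rw [h1]
    calc ∑ _h ∈ S, a ≤ _ := h2
      _ = ∑ h ∈ S, h.natDegree + ∑ h ∈ S, (a - h.natDegree) := Finset.sum_add_distrib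
      _ ≤ n + _ := add_le_add hsum (hW a ha)
  have k1 := hk 1 (by norm_num)
  have k2 := hk 2 (by norm_num)
  have k3 := hk 3 (by norm_num)
  have k4 := hk 4 (by norm_num)
  have k5 := hk 5 (by norm_num)
  norm_num at k1 k2 k3 k4 k5
  have r1 := (Nat.cast_le (α := ℝ)).mpr k1
  have r2 := (Nat.cast_le (α := ℝ)).mpr k2
  have r3 := (Nat.cast_le (α := ℝ)).mpr k3
  have r4 := (Nat.cast_le (α := ℝ)).mpr k4
  have r5 := (Nat.cast_le (α := ℝ)).mpr k5
  have s1 := (Nat.cast_le (α := ℝ)).mpr c1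
  have s2 := (Nat.cast_le (α := ℝ)).mpr c2
  have s3 := (Nat.cast_le (α := ℝ)).mpr c3
  have s4 := (Nat.cast_le (α := ℝ)).mpr c4
  push_cast at r1 r2 r3 r4 r5 s1 s2 s3 s4
  have hM1 : (0 : ℝ) ≤ (M 1 : ℝ) := Nat.cast_nonneg _
  have hM2 : (0 : ℝ) ≤ (M 2 : ℝ) := Nat.cast_nonneg _
  have hM3 : (0 : ℝ) ≤ (M 3 : ℝ) := Nat.cast_nonneg _
  have hM4 : (0 : ℝ) ≤ (M 4 : ℝ) := Nat.cast_nonneg _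
  refine ⟨by linarith, by linarith, by linarith, by linarith, by linarith⟩
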